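/- Let G be a finite connected graph with δ-thin triangles and let u,v be a pair of mutually distant vertices of G. If c is a middle vertex of any (u,v)-geodesic, then ecc_G(c) ≤ ⌈d_G(u,v)/2⌉ + δ ≤ rad(G) + δ. -/

import Mathlib

open SimpleGraph

variable {V : Type*}

/-- Eccentricity of a vertex: the largest distance from `v` to any vertex. -/
noncomputable def ecc [Fintype V] (G : SimpleGraph V) (v : V) : ℕ :=
  Finset.univ.sup fun u => G.dist v u

/-- Radius: the minimum eccentricity. -/
noncomputable def rad [Fintype V] (G : SimpleGraph V) : ℕ :=
  sInf (Set.range (ecc G))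

/-- Diameter: the maximum eccentricity. -/
noncomputable def gdiam [Fintype V] (G : SimpleGraph V) : ℕ :=
  Finset.univ.sup fun v => ecc G v

/-- `G` has δ-thin triangles: for all vertices `x y z`, all geodesics `p1` from `x` to `y`
and `p2` from `x` to `z`, and all vertices `u ∈ p1`, `v ∈ p2` with
`d(x,u) = d(x,v) ≤ (y|z)_x`, one has `d(u,v) ≤ δ`.  The Gromov product condition
`d(x,u) ≤ (y|z)_x = (d(x,y) + d(x,z) - d(y,z))/2` is written additively in `ℕ`. -/
def ThinTriangles (G : SimpleGraph V) (δ : ℝ) : Prop :=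
  ∀ (x y z : V) (p1 : G.Walk x y) (p2 : G.Walk x z),
    p1.length = G.dist x y → p2.length = G.dist x z →
    ∀ u ∈ p1.support, ∀ v ∈ p2.support,
      G.dist x u = G.dist x v →
      2 * G.dist x u + G.dist y z ≤ G.dist x y + G.dist x z →
      (G.dist u v : ℝ) ≤ δ

/-- On a geodesic, distances split additively at any support vertex. -/
lemma geo_split (G : SimpleGraph V) (hG : G.Connected) {a b : V} (p : G.Walk a b)
    (hp : p.length = G.dist a b) {c : V} (hc : c ∈ p.support) :
    G.dist a c + G.dist c b = G.dist a b := by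
  classical
  have h1 : G.dist a c ≤ (p.takeUntil c hc).length := G.dist_le _
  have h2 : G.dist c b ≤ (p.dropUntil c hc).length := G.dist_le _
  have h3 : (p.takeUntil c hc).length + (p.dropUntil c hc).length = p.length := by
    rw [← SimpleGraph.Walk.length_append, p.take_spec hc]
  have h4 : G.dist a b ≤ G.dist a c + G.dist c b := hG.dist_triangle
  omega

/-- On a geodesic from `a` to `b`, for every `k ≤ length` there is a support
vertex at distance exactly `k` from `a`. -/
lemma geo_exists (G : SimpleGraph V) (hG : G.Connected) {a b : V} (p : G.Walk a b) :
    p.length = G.dist a b → ∀ k, k ≤ p.length →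
    ∃ c ∈ p.support, G.dist a c = k ∧ G.dist c b + k = p.length := by
  induction p with
  | nil =>
    intro _ k hk
    simp only [SimpleGraph.Walk.length_nil, Nat.le_zero] at hk
    subst hk
    refine ⟨_, SimpleGraph.Walk.start_mem_support _, by simp, by simp⟩
  | @cons a a' b hadj q ih =>
    intro hp k hk
    simp only [SimpleGraph.Walk.length_cons] at hp hk
    have haa' : G.dist a a' ≤ 1 := by
      simpa using G.dist_le (SimpleGraph.Walk.cons hadj SimpleGraph.Walk.nil)
    have hq : q.length = G.dist a' b := by
      have h1 : G.dist a' b ≤ q.length := G.dist_le q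
      have h2 : G.dist a b ≤ G.dist a a' + G.dist a' b := hG.dist_triangle
      omega
    rcases Nat.eq_zero_or_pos k with hk0 | hkpos
    · subst hk0
      exact ⟨a, SimpleGraph.Walk.start_mem_support _, by simp,
        by simp only [SimpleGraph.Walk.length_cons]; omega⟩
    · obtain ⟨j, rfl⟩ := Nat.exists_eq_add_of_lt hkpos
      simp only [Nat.zero_add] at *
      obtain ⟨c, hcmem, hc1, hc2⟩ := ih hq j (by omega)
      refine ⟨c, by simp [hcmem], ?_, ?_⟩
      · have h1 : G.dist a c ≤ G.dist a a' + G.dist a' c := hG.dist_triangle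
        have h2 : G.dist a b ≤ G.dist a c + G.dist c b := hG.dist_triangle
        omega
      · have h1 : G.dist a c ≤ G.dist a a' + G.dist a' c := hG.dist_triangle
        have h2 : G.dist a b ≤ G.dist a c + G.dist c b := hG.dist_triangle
        simp only [SimpleGraph.Walk.length_cons]
        omega

/-- If `u, v` are mutually distant and `c` is a middle vertex of a
`(u,v)`-geodesic, then `ecc(c) ≤ ⌈d(u,v)/2⌉ + δ ≤ rad(G) + δ`. -/
theorem stmt_1 [Fintype V] (G : SimpleGraph V) (hG : G.Connected)
    (δ : ℝ) (hδ : 0 ≤ δ) (hthin : ThinTriangles G δ)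
    (u v : V) (hu : G.dist u v = ecc G u) (hv : G.dist u v = ecc G v)
    (P : G.Walk u v) (hP : P.length = G.dist u v)
    (c : V) (hcP : c ∈ P.support)
    (hmid : |(G.dist u c : ℝ) - (G.dist u v : ℝ) / 2| ≤ 1 / 2) :
    (ecc G c : ℝ) ≤ (↑((G.dist u v + 1) / 2) : ℝ) + δ ∧
    (↑((G.dist u v + 1) / 2) : ℝ) + δ ≤ (rad G : ℝ) + δ := by
  set D := G.dist u v with hD
  set k := G.dist u c with hk
  -- middle vertex bounds as naturals
  have hmid' : D ≤ 2 * k + 1 ∧ 2 * k ≤ D + 1 := by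
    rw [abs_le] at hmid
    obtain ⟨h1, h2⟩ := hmid
    constructor
    · have : (D : ℝ) ≤ 2 * k + 1 := by linarith
      exact_mod_cast this
    · have : (2 * k : ℝ) ≤ D + 1 := by linarith
      exact_mod_cast this
  have hsplit : G.dist u c + G.dist c v = D := geo_split G hG P hP hcP
  constructor
  · -- bound ecc c
    have hub : ∀ x : V, (G.dist c x : ℝ) ≤ ((D + 1) / 2 : ℕ) + δ := by
      intro x
      have hux : G.dist u x ≤ D := by
        rw [hu]; exact Finset.le_sup (Finset.mem_univ x)
      have hvx : G.dist v x ≤ D := by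
        rw [hv]; exact Finset.le_sup (Finset.mem_univ x)
      have htri1 : D ≤ G.dist u x + G.dist x v := hG.dist_triangle
      have hxv : G.dist x v = G.dist v x := G.dist_comm ..
      by_cases hcase : 2 * k + G.dist v x ≤ D + G.dist u x
      · -- apex u
        obtain ⟨Q, hQ⟩ := hG.exists_walk_length_eq_dist u x
        have hkle : k ≤ Q.length := by rw [hQ]; omega
        obtain ⟨c', hc'mem, hc'1, hc'2⟩ := geo_exists G hG Q hQ k hkle
        have hthin' : (G.dist c c' : ℝ) ≤ δ :=
          hthin u v x P Q hP hQ c hcP c' hc'mem (by rw [hc'1, hk]) (by omega)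
        have htri2 : G.dist c x ≤ G.dist c c' + G.dist c' x := hG.dist_triangle
        have hfin : G.dist c' x ≤ (D + 1) / 2 := by
          have := hc'2; rw [hQ] at this; omega
        have : (G.dist c x : ℝ) ≤ (G.dist c c' : ℝ) + (G.dist c' x : ℝ) := by
          exact_mod_cast htri2
        have h2 : (G.dist c' x : ℝ) ≤ ((D + 1) / 2 : ℕ) := by exact_mod_cast hfin
        linarith
      · -- apex v
        push_neg at hcase
        obtain ⟨R, hR⟩ := hG.exists_walk_length_eq_dist v x
        have hvc : G.dist v c = D - k := by
          rw [G.dist_comm]; omega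
        have hDk : D - k ≤ R.length := by rw [hR]; omega
        obtain ⟨c'', hc''mem, hc''1, hc''2⟩ := geo_exists G hG R hR (D - k) hDk
        have hPrev : P.reverse.length = G.dist v u := by
          rw [SimpleGraph.Walk.length_reverse, hP, G.dist_comm]
        have hcrev : c ∈ P.reverse.support := by
          rw [SimpleGraph.Walk.support_reverse]; exact List.mem_reverse.mpr hcP
        have hgrom : 2 * G.dist v c + G.dist u x ≤ G.dist v u + G.dist v x := by
          rw [hvc, G.dist_comm (u := v) (v := u)]; omega
        have hthin' : (G.dist c c'' : ℝ) ≤ δ :=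
          hthin v u x P.reverse R hPrev hR c hcrev c'' hc''mem
            (by rw [hvc, hc''1]) hgrom
        have htri2 : G.dist c x ≤ G.dist c c'' + G.dist c'' x := hG.dist_triangle
        have hfin : G.dist c'' x ≤ (D + 1) / 2 := by
          have := hc''2; rw [hR] at this; omega
        have : (G.dist c x : ℝ) ≤ (G.dist c c'' : ℝ) + (G.dist c'' x : ℝ) := by
          exact_mod_cast htri2
        have h2 : (G.dist c'' x : ℝ) ≤ ((D + 1) / 2 : ℕ) := by exact_mod_cast hfin
        linarith
    -- ecc c = some dist c x
    have hne : (Finset.univ : Finset V).Nonempty := ⟨u, Finset.mem_univ u⟩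
    obtain ⟨x, _, hx⟩ := Finset.exists_mem_eq_sup Finset.univ hne (fun w => G.dist c w)
    have : ecc G c = G.dist c x := hx
    rw [this]
    exact hub x
  · -- (D+1)/2 ≤ rad
    have hbound : ∀ w : V, (D + 1) / 2 ≤ ecc G w := by
      intro w
      have h1 : G.dist w u ≤ ecc G w := Finset.le_sup (Finset.mem_univ u)
      have h2 : G.dist w v ≤ ecc G w := Finset.le_sup (Finset.mem_univ v)
      have h3 : D ≤ G.dist u w + G.dist w v := hG.dist_triangle
      have h4 : G.dist u w = G.dist w u := G.dist_comm ..
      omega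
    have : (D + 1) / 2 ≤ rad G := by
      apply le_csInf ⟨ecc G u, Set.mem_range_self u⟩
      rintro b ⟨w, rfl⟩
      exact hbound w
    exact add_le_add_left (Nat.cast_le.mpr this) δ
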